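/- Let G be a simple graph with maximum degree at most 3, and fix ℓ ∈ {4,5}. Then the C_ℓ-vertex-conflict graph of G is claw-free: there is no copy C* of the ℓ-cycle in G together with three pairwise vertex-disjoint copies C₁, C₂, C₃ of the ℓ-cycle, each sharing a vertex with C*. -/

import Mathlib

open SimpleGraph

private lemma cycleSub_two_adj {V : Type*} {G : SimpleGraph V} {C : G.Subgraph} {n : ℕ}
    (e : C.coe ≃g cycleGraph (n+3)) {v : V} (hv : v ∈ C.verts) :
    ∃ a b : V, a ≠ b ∧ C.Adj v a ∧ C.Adj v b := by
  set x : Fin (n+3) := e ⟨v, hv⟩ with hx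
  have hadj1 : (cycleGraph (n+3)).Adj x (x - 1) := by
    rw [show (n+3) = (n+1)+2 from rfl] at *
    rw [cycleGraph_adj]; left; open Fin.CommRing in ring
  have hadj2 : (cycleGraph (n+3)).Adj x (x + 1) := by
    rw [show (n+3) = (n+1)+2 from rfl] at *
    rw [cycleGraph_adj]; right; open Fin.CommRing in ring
  have hne : x - 1 ≠ x + 1 := by
    intro h
    have h2 : (x + 1) - (x - 1) = 0 := by rw [← h]; open Fin.CommRing in ring
    have h3 : ((2 : Fin (n+3))) = 0 := by rw [← h2]; open Fin.CommRing in ring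
    have := congrArg Fin.val h3
    simp [Fin.ext_iff] at this
    rw [Nat.mod_eq_of_lt (by omega)] at this; omega
  refine ⟨(e.symm (x-1)).val, (e.symm (x+1)).val, ?_, ?_, ?_⟩
  · intro h
    exact hne (e.symm.injective (Subtype.val_injective h))
  · have := e.symm.map_rel_iff.mpr hadj1
    rw [hx, RelIso.symm_apply_apply] at this
    exact this
  · have := e.symm.map_rel_iff.mpr hadj2
    rw [hx, RelIso.symm_apply_apply] at this
    exact this

/-- Key step: each `Ci` shares at least two vertices with `Cs`. -/
private lemma two_le_ncard_inter {V : Type*} [Fintype V] {G : SimpleGraph V}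
    [DecidableRel G.Adj] (hG : G.maxDegree ≤ 3) {Cs Ci : G.Subgraph} {n : ℕ}
    (es : Cs.coe ≃g cycleGraph (n+3)) (ei : Ci.coe ≃g cycleGraph (n+3))
    (hne : (Cs.verts ∩ Ci.verts).Nonempty) :
    2 ≤ (Cs.verts ∩ Ci.verts).ncard := by
  classical
  obtain ⟨v, hvs, hvi⟩ := hne
  obtain ⟨a, b, hab, hva, hvb⟩ := cycleSub_two_adj es hvs
  obtain ⟨c, d, hcd, hvc, hvd⟩ := cycleSub_two_adj ei hvi
  -- all four are G-neighbors of v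
  have hmem : ∀ w : V, Cs.Adj v w ∨ Ci.Adj v w → w ∈ G.neighborFinset v := by
    intro w hw
    rw [SimpleGraph.mem_neighborFinset]
    rcases hw with h | h
    · exact h.adj_sub
    · exact h.adj_sub
  have hdeg : G.degree v ≤ 3 := le_trans (G.degree_le_maxDegree v) hG
  -- there is a common neighbor
  have hcommon : c = a ∨ c = b ∨ d = a ∨ d = b := by
    by_contra hcon
    push_neg at hcon
    obtain ⟨hca, hcb, hda, hdb⟩ := hcon
    have hsub : ({a, b, c, d} : Finset V) ⊆ G.neighborFinset v := by
      intro w hw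
      simp only [Finset.mem_insert, Finset.mem_singleton] at hw
      rcases hw with rfl | rfl | rfl | rfl
      · exact hmem _ (Or.inl hva)
      · exact hmem _ (Or.inl hvb)
      · exact hmem _ (Or.inr hvc)
      · exact hmem _ (Or.inr hvd)
    have hcard : ({a, b, c, d} : Finset V).card = 4 := by
      rw [Finset.card_insert_of_notMem (by simp [hab, hca.symm, hda.symm]),
        Finset.card_insert_of_notMem (by simp [hcb.symm, hdb.symm]),
        Finset.card_pair hcd]
    have := Finset.card_le_card hsub
    rw [hcard] at this
    exact absurd (le_trans this hdeg) (by norm_num)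
  -- the common neighbor gives a second vertex in the intersection
  have key : ∃ u : V, u ≠ v ∧ u ∈ Cs.verts ∩ Ci.verts := by
    have huv : ∀ u : V, Cs.Adj v u → Ci.Adj v u → u ≠ v ∧ u ∈ Cs.verts ∩ Ci.verts := by
      intro u h1 h2
      exact ⟨fun h => G.irrefl (h ▸ h1.adj_sub), h1.snd_mem, h2.snd_mem⟩
    rcases hcommon with rfl | rfl | rfl | rfl
    · exact ⟨c, huv c hva hvc⟩
    · exact ⟨c, huv c hvb hvc⟩
    · exact ⟨d, huv d hva hvd⟩
    · exact ⟨d, huv d hvb hvd⟩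
  obtain ⟨u, huv, hu⟩ := key
  have hsub : ({u, v} : Set V) ⊆ Cs.verts ∩ Ci.verts := by
    intro w hw
    rcases hw with rfl | rfl
    · exact hu
    · exact ⟨hvs, hvi⟩
  calc 2 = ({u, v} : Set V).ncard := (Set.ncard_pair huv).symm
    _ ≤ (Cs.verts ∩ Ci.verts).ncard :=
        Set.ncard_le_ncard hsub ((Set.toFinite _))

theorem cycle_vertex_conflict_claw_free_of_maxDegree_le_three
    {V : Type*} [Fintype V] (G : SimpleGraph V) [DecidableRel G.Adj]
    (hG : G.maxDegree ≤ 3) (ℓ : ℕ) (hℓ : ℓ = 4 ∨ ℓ = 5) :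
    ¬ ∃ (Cs C1 C2 C3 : G.Subgraph),
        Nonempty (Cs.coe ≃g cycleGraph ℓ) ∧ Nonempty (C1.coe ≃g cycleGraph ℓ) ∧
        Nonempty (C2.coe ≃g cycleGraph ℓ) ∧ Nonempty (C3.coe ≃g cycleGraph ℓ) ∧
        (Cs.verts ∩ C1.verts).Nonempty ∧
        (Cs.verts ∩ C2.verts).Nonempty ∧
        (Cs.verts ∩ C3.verts).Nonempty ∧
        Disjoint C1.verts C2.verts ∧
        Disjoint C1.verts C3.verts ∧
        Disjoint C2.verts C3.verts := by
  classical
  rintro ⟨Cs, C1, C2, C3, ⟨es⟩, ⟨e1⟩, ⟨e2⟩, ⟨e3⟩, h1, h2, h3, d12, d13, d23⟩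
  obtain ⟨n, rfl⟩ : ∃ n, ℓ = n + 3 := by rcases hℓ with rfl | rfl; exacts [⟨1, rfl⟩, ⟨2, rfl⟩]
  have hℓ5 : n + 3 ≤ 5 := by rcases hℓ with h | h <;> omega
  -- each intersection has at least 2 vertices
  have k1 := two_le_ncard_inter hG es e1 h1
  have k2 := two_le_ncard_inter hG es e2 h2
  have k3 := two_le_ncard_inter hG es e3 h3
  set S1 := Cs.verts ∩ C1.verts
  set S2 := Cs.verts ∩ C2.verts
  set S3 := Cs.verts ∩ C3.verts
  have hd12 : Disjoint S1 S2 := d12.mono Set.inter_subset_right Set.inter_subset_right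
  have hd13 : Disjoint S1 S3 := d13.mono Set.inter_subset_right Set.inter_subset_right
  have hd23 : Disjoint S2 S3 := d23.mono Set.inter_subset_right Set.inter_subset_right
  have hcardCs : Cs.verts.ncard = n + 3 := by
    rw [← Nat.card_coe_set_eq, Nat.card_congr es.toEquiv, Nat.card_eq_fintype_card,
      Fintype.card_fin]
  have hsub : S1 ∪ S2 ∪ S3 ⊆ Cs.verts := by
    intro w hw
    rcases hw with (hw | hw) | hw <;> exact hw.1
  have hunion : (S1 ∪ S2 ∪ S3).ncard = S1.ncard + S2.ncard + S3.ncard := by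
    rw [Set.ncard_union_eq (by exact Disjoint.union_left hd13 hd23) (Set.toFinite _) (Set.toFinite _),
      Set.ncard_union_eq hd12 (Set.toFinite _) (Set.toFinite _)]
  have := Set.ncard_le_ncard hsub (Set.toFinite _)
  rw [hunion, hcardCs] at this
  omega
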